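/- For every index i and natural number n, the Dirichlet moment satisfies E_α[p_i^n · log p_i] = (α_i^{(n)} / α₀^{(n)}) · (ψ(α_i + n) − ψ(α₀ + n)). -/

import Mathlib

open Real MeasureTheory

/-- The open simplex `S ⊆ ℝ^{K-1}`: all coordinates positive and summing to less than 1. -/
def dirSimplex (K : ℕ) : Set (Fin (K - 1) → ℝ) :=
  {x | (∀ i, 0 < x i) ∧ ∑ i, x i < 1}

/-- The probability vector `p(x) ∈ ℝ^K` associated to `x ∈ ℝ^{K-1}`:
`pᵢ(x) = xᵢ` for `i < K - 1` and `p_{K-1}(x) = 1 - ∑_{i<K-1} xᵢ`. -/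
noncomputable def probVec (K : ℕ) (x : Fin (K - 1) → ℝ) (i : Fin K) : ℝ :=
  if h : (i : ℕ) < K - 1 then x ⟨i, h⟩ else 1 - ∑ j, x j

/-- The Dirichlet density `f_α(x) = (Γ(α₀) / ∏ᵢ Γ(αᵢ)) ∏ᵢ pᵢ(x)^{αᵢ - 1}` (on the simplex). -/
noncomputable def dirDensity {K : ℕ} (α : Fin K → ℝ) (x : Fin (K - 1) → ℝ) : ℝ :=
  (Real.Gamma (∑ i, α i) / ∏ i, Real.Gamma (α i)) * ∏ i, probVec K x i ^ (α i - 1)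

/-- Dirichlet expectation `E_α[g] = ∫_S g(p(x)) f_α(x) dx` (Lebesgue measure on `ℝ^{K-1}`). -/
noncomputable def dirE {K : ℕ} (α : Fin K → ℝ) (g : (Fin K → ℝ) → ℝ) : ℝ :=
  ∫ x in dirSimplex K, g (probVec K x) * dirDensity α x

/-- The digamma function: the derivative of `log ∘ Γ`. -/
noncomputable def digamma (t : ℝ) : ℝ := deriv (fun s => Real.log (Real.Gamma s)) t

/-- The trigamma function: the second derivative of `log ∘ Γ`. -/
noncomputable def trigamma (t : ℝ) : ℝ := deriv (deriv (fun s => Real.log (Real.Gamma s))) t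

/-- The rising factorial `z^{(n)} = z (z+1) ⋯ (z+n-1)`. -/
noncomputable def risingFac (z : ℝ) (n : ℕ) : ℝ := ∏ k ∈ Finset.range n, (z + (k : ℝ))

open Set Filter

/-- Beta value. -/
noncomputable def mybeta (a b : ℝ) : ℝ := Real.Gamma a * Real.Gamma b / Real.Gamma (a + b)

lemma betaIntegrand_eq_norm {a b : ℝ} {t : ℝ} (ht : t ∈ Ioo (0:ℝ) 1) :
    t ^ (a - 1) * (1 - t) ^ (b - 1) =
      ‖(t : ℂ) ^ ((a:ℂ) - 1) * (1 - (t:ℂ)) ^ ((b:ℂ) - 1)‖ := by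
  rw [norm_mul]
  rw [Complex.norm_cpow_eq_rpow_re_of_pos (by exact_mod_cast ht.1)]
  have h1 : ((1:ℂ) - (t:ℂ)) = ((1 - t : ℝ) : ℂ) := by push_cast; ring
  rw [h1, Complex.norm_cpow_eq_rpow_re_of_pos (by linarith [ht.2])]
  norm_num

lemma betaIntegrable {a b : ℝ} (ha : 0 < a) (hb : 0 < b) :
    IntegrableOn (fun t : ℝ => t ^ (a - 1) * (1 - t) ^ (b - 1)) (Ioo 0 1) := by
  have h := (Complex.betaIntegral_convergent (u := (a:ℂ)) (v := (b:ℂ))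
    (by simpa using ha) (by simpa using hb))
  have h2 : IntegrableOn (fun t : ℝ => (t : ℂ) ^ ((a:ℂ) - 1) * (1 - (t:ℂ)) ^ ((b:ℂ) - 1))
      (Ioo 0 1) := ((intervalIntegrable_iff_integrableOn_Ioo_of_le one_pos.le).mp h)
  have := h2.norm
  apply this.congr ((ae_restrict_iff' measurableSet_Ioo).2 (Filter.Eventually.of_forall ?_))
  intro t ht
  exact (betaIntegrand_eq_norm ht).symm

lemma betaIntegral_eq {a b : ℝ} (ha : 0 < a) (hb : 0 < b) :
    ∫ t in Ioo (0:ℝ) 1, t ^ (a - 1) * (1 - t) ^ (b - 1) = mybeta a b := by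
  have key := Complex.Gamma_mul_Gamma_eq_betaIntegral (s := (a:ℂ)) (t := (b:ℂ))
    (by simpa using ha) (by simpa using hb)
  have hβ : Complex.betaIntegral (a:ℂ) (b:ℂ) =
      ((∫ t in Ioo (0:ℝ) 1, t ^ (a - 1) * (1 - t) ^ (b - 1) : ℝ) : ℂ) := by
    rw [Complex.betaIntegral]
    rw [intervalIntegral.integral_of_le one_pos.le, MeasureTheory.integral_Ioc_eq_integral_Ioo]
    rw [show (∫ t in Ioo (0:ℝ) 1, (t:ℂ) ^ ((a:ℂ) - 1) * (1 - (t:ℂ)) ^ ((b:ℂ) - 1))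
        = ∫ t in Ioo (0:ℝ) 1, ((t ^ (a-1) * (1-t) ^ (b-1) : ℝ) : ℂ) from
      setIntegral_congr_fun measurableSet_Ioo fun t ht => ?_]
    · exact integral_ofReal
    have h1 : ((t:ℂ)) ^ ((a:ℂ) - 1) = ((t ^ (a-1) : ℝ) : ℂ) := by
      rw [Complex.ofReal_cpow ht.1.le]; norm_cast
    have h2 : ((1:ℂ) - (t:ℂ)) ^ ((b:ℂ) - 1) = (((1 - t) ^ (b-1) : ℝ) : ℂ) := by
      have : ((1:ℂ) - (t:ℂ)) = ((1 - t : ℝ) : ℂ) := by push_cast; ring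
      rw [this, Complex.ofReal_cpow (by linarith [ht.2] : (0:ℝ) ≤ 1 - t)]; norm_cast
    rw [h1, h2, ← Complex.ofReal_mul]
  rw [hβ] at key
  have hG : Complex.Gamma ((a:ℂ) + (b:ℂ)) ≠ 0 := by
    rw [← Complex.ofReal_add, Complex.Gamma_ofReal]
    exact_mod_cast (Real.Gamma_pos_of_pos (by linarith)).ne'
  have : ((∫ t in Ioo (0:ℝ) 1, t ^ (a - 1) * (1 - t) ^ (b - 1) : ℝ) : ℂ)
      = Complex.Gamma a * Complex.Gamma b / Complex.Gamma ((a:ℂ) + (b:ℂ)) := by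
    rw [eq_div_iff hG]; linear_combination -key
  rw [← Complex.ofReal_add, Complex.Gamma_ofReal, Complex.Gamma_ofReal, Complex.Gamma_ofReal]
    at this
  have := congrArg Complex.re this
  simpa [mybeta, ← Complex.ofReal_div] using this

lemma Gamma_diffAt {t : ℝ} (ht : 0 < t) : DifferentiableAt ℝ Real.Gamma t :=
  Real.differentiableAt_Gamma (fun m => by
    have : -(m:ℝ) ≤ 0 := neg_nonpos.2 (Nat.cast_nonneg m)
    exact ne_of_gt (by linarith))

lemma hasDerivAt_logGamma {t : ℝ} (ht : 0 < t) :
    HasDerivAt (fun s => Real.log (Real.Gamma s)) (deriv Real.Gamma t / Real.Gamma t) t :=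
  (Gamma_diffAt ht).hasDerivAt.log (Real.Gamma_pos_of_pos ht).ne'

lemma digamma_eq {t : ℝ} (ht : 0 < t) :
    digamma t = deriv Real.Gamma t / Real.Gamma t :=
  (hasDerivAt_logGamma ht).deriv

lemma betaMeas (a b : ℝ) :
    Measurable (fun t : ℝ => t ^ (a - 1) * (1 - t) ^ (b - 1)) := by fun_prop

lemma betaLogIntegrable {a b : ℝ} (ha : 0 < a) (hb : 0 < b) :
    IntegrableOn (fun t : ℝ => t ^ (a - 1) * (1 - t) ^ (b - 1) * |Real.log t|) (Ioo 0 1) := by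
  have hbig : IntegrableOn (fun t : ℝ => (2/a) * (t ^ (a/2 - 1) * (1 - t) ^ (b - 1)))
      (Ioo 0 1) := (betaIntegrable (by linarith) hb).const_mul _
  refine Integrable.mono hbig (((betaMeas a b).mul Real.measurable_log.abs).aestronglyMeasurable) ?_
  rw [ae_restrict_iff' measurableSet_Ioo]
  refine Filter.Eventually.of_forall fun t ht => ?_
  have ht0 := ht.1; have ht1 := ht.2
  have h1t : (0:ℝ) < 1 - t := by linarith
  have hlog : |Real.log t| ≤ (2/a) * t ^ (-(a/2)) := by
    rw [abs_of_nonpos (Real.log_nonpos ht0.le ht1.le), ← Real.log_inv]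
    have := Real.log_le_rpow_div (le_of_lt (inv_pos.2 ht0)) (by linarith : (0:ℝ) < a/2)
    calc Real.log t⁻¹ ≤ (t⁻¹) ^ (a/2) / (a/2) := this
      _ = (2/a) * t ^ (-(a/2)) := by
          rw [Real.inv_rpow ht0.le, ← Real.rpow_neg ht0.le]; ring
  rw [Real.norm_eq_abs, Real.norm_eq_abs,
    abs_of_nonneg (by positivity : (0:ℝ) ≤ t ^ (a - 1) * (1 - t) ^ (b - 1) * |Real.log t|)]
  have step : t ^ (a - 1) * (1 - t) ^ (b - 1) * |Real.log t|
      ≤ t ^ (a - 1) * (1 - t) ^ (b - 1) * ((2/a) * t ^ (-(a/2))) :=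
    mul_le_mul_of_nonneg_left hlog (by positivity)
  have heq : t ^ (a - 1) * (1 - t) ^ (b - 1) * ((2/a) * t ^ (-(a/2)))
      = (2/a) * (t ^ (a/2 - 1) * (1 - t) ^ (b - 1)) := by
    rw [show a/2 - 1 = (a - 1) + (-(a/2)) by ring, Real.rpow_add ht0]
    ring
  refine step.trans ?_
  rw [heq]
  exact le_abs_self _

set_option maxHeartbeats 1000000 in
lemma betaLog_hasDeriv {a b : ℝ} (ha : 0 < a) (hb : 0 < b) :
    IntegrableOn (fun t : ℝ => Real.log t * (t ^ (a - 1) * (1 - t) ^ (b - 1))) (Ioo 0 1) ∧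
    HasDerivAt (fun s => ∫ t in Ioo (0:ℝ) 1, t ^ (s - 1) * (1 - t) ^ (b - 1))
      (∫ t in Ioo (0:ℝ) 1, Real.log t * (t ^ (a - 1) * (1 - t) ^ (b - 1))) a := by
  have hmeas : ∀ᶠ s in nhds a, AEStronglyMeasurable
      (fun t : ℝ => t ^ (s - 1) * (1 - t) ^ (b - 1)) (volume.restrict (Ioo 0 1)) :=
    Filter.Eventually.of_forall fun s => (betaMeas s b).aestronglyMeasurable
  have hint : Integrable (fun t : ℝ => t ^ (a - 1) * (1 - t) ^ (b - 1))
      (volume.restrict (Ioo 0 1)) := betaIntegrable ha hb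
  have hmeas' : AEStronglyMeasurable
      (fun t : ℝ => Real.log t * (t ^ (a - 1) * (1 - t) ^ (b - 1)))
      (volume.restrict (Ioo 0 1)) :=
    ((Real.measurable_log.mul (betaMeas a b))).aestronglyMeasurable
  have hbound : ∀ᵐ t ∂(volume.restrict (Ioo (0:ℝ) 1)), ∀ s ∈ Metric.ball a (a/2),
      ‖Real.log t * (t ^ (s - 1) * (1 - t) ^ (b - 1))‖
        ≤ t ^ (a/2 - 1) * (1 - t) ^ (b - 1) * |Real.log t| := by
    rw [ae_restrict_iff' measurableSet_Ioo]
    refine Filter.Eventually.of_forall fun t ht s hs => ?_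
    have ht0 := ht.1; have ht1 := ht.2
    have h1t : (0:ℝ) < 1 - t := by linarith
    rw [Metric.mem_ball, Real.dist_eq, abs_sub_lt_iff] at hs
    have hst : t ^ (s - 1) ≤ t ^ (a/2 - 1) :=
      Real.rpow_le_rpow_of_exponent_ge ht0 ht1.le (by linarith [hs.1, hs.2])
    rw [Real.norm_eq_abs, abs_mul, abs_of_nonneg (by positivity :
      (0:ℝ) ≤ t ^ (s - 1) * (1 - t) ^ (b - 1))]
    calc |Real.log t| * (t ^ (s - 1) * (1 - t) ^ (b - 1))
        ≤ |Real.log t| * (t ^ (a/2 - 1) * (1 - t) ^ (b - 1)) :=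
          mul_le_mul_of_nonneg_left
            (mul_le_mul_of_nonneg_right hst (by positivity)) (abs_nonneg _)
      _ = t ^ (a/2 - 1) * (1 - t) ^ (b - 1) * |Real.log t| := by ring
  have hbint : Integrable (fun t : ℝ => t ^ (a/2 - 1) * (1 - t) ^ (b - 1) * |Real.log t|)
      (volume.restrict (Ioo 0 1)) := betaLogIntegrable (by linarith) hb
  have hdiff : ∀ᵐ t ∂(volume.restrict (Ioo (0:ℝ) 1)), ∀ s ∈ Metric.ball a (a/2),
      HasDerivAt (fun s => t ^ (s - 1) * (1 - t) ^ (b - 1))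
        (Real.log t * (t ^ (s - 1) * (1 - t) ^ (b - 1))) s := by
    rw [ae_restrict_iff' measurableSet_Ioo]
    refine Filter.Eventually.of_forall fun t ht s _ => ?_
    have h := ((hasStrictDerivAt_const_rpow ht.1 (s-1)).hasDerivAt.comp s
      ((hasDerivAt_id s).sub_const 1)).mul_const ((1 - t) ^ (b - 1))
    exact h.congr_deriv (by ring)
  exact hasDerivAt_integral_of_dominated_loc_of_deriv_le
    (F := fun s (t : ℝ) => t ^ (s - 1) * (1 - t) ^ (b - 1))
    (F' := fun s (t : ℝ) => Real.log t * (t ^ (s - 1) * (1 - t) ^ (b - 1)))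
    (bound := fun t : ℝ => t ^ (a/2 - 1) * (1 - t) ^ (b - 1) * |Real.log t|)
    (Metric.ball_mem_nhds a (show (0:ℝ) < a/2 by linarith)) hmeas hint hmeas' hbound hbint hdiff

lemma betaLog_eq {a b : ℝ} (ha : 0 < a) (hb : 0 < b) :
    ∫ t in Ioo (0:ℝ) 1, Real.log t * (t ^ (a - 1) * (1 - t) ^ (b - 1))
      = mybeta a b * (digamma a - digamma (a + b)) := by
  obtain ⟨-, hD⟩ := betaLog_hasDeriv ha hb
  have hev : (fun s => ∫ t in Ioo (0:ℝ) 1, t ^ (s - 1) * (1 - t) ^ (b - 1))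
      =ᶠ[nhds a] fun s => mybeta s b := by
    filter_upwards [eventually_gt_nhds ha] with s hs
    exact betaIntegral_eq hs hb
  have hG : ∀ {t : ℝ}, 0 < t → Real.Gamma t ≠ 0 := fun ht => (Real.Gamma_pos_of_pos ht).ne'
  have hab : (0:ℝ) < a + b := by linarith
  have hD2 : HasDerivAt (fun s => mybeta s b)
      ((deriv Real.Gamma a * Real.Gamma b * Real.Gamma (a+b)
        - Real.Gamma a * Real.Gamma b * deriv Real.Gamma (a+b)) / (Real.Gamma (a+b))^2) a := by
    have h1 : HasDerivAt (fun s : ℝ => Real.Gamma s * Real.Gamma b)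
        (deriv Real.Gamma a * Real.Gamma b) a := (Gamma_diffAt ha).hasDerivAt.mul_const _
    have h2 : HasDerivAt (fun s : ℝ => Real.Gamma (s + b)) (deriv Real.Gamma (a+b)) a := by
      have h := HasDerivAt.comp a (Gamma_diffAt hab).hasDerivAt ((hasDerivAt_id a).add_const b)
      exact h.congr_deriv (by simp)
    have := h1.div h2 (hG hab)
    exact this
  have huniq := ((hD2.congr_of_eventuallyEq hev).unique hD)
  rw [← huniq, mybeta, digamma_eq ha, digamma_eq hab]
  have hne := hG hab
  field_simp

lemma betaLog_one_sub_eq {a b : ℝ} (ha : 0 < a) (hb : 0 < b) :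
    ∫ t in Ioo (0:ℝ) 1, Real.log (1 - t) * (t ^ (a - 1) * (1 - t) ^ (b - 1))
      = mybeta a b * (digamma b - digamma (a + b)) := by
  have key := betaLog_eq hb ha
  have hflip : ∫ t in Ioo (0:ℝ) 1, Real.log (1 - t) * (t ^ (a - 1) * (1 - t) ^ (b - 1))
      = ∫ t in Ioo (0:ℝ) 1, Real.log t * (t ^ (b - 1) * (1 - t) ^ (a - 1)) := by
    rw [← MeasureTheory.integral_Ioc_eq_integral_Ioo,
        ← MeasureTheory.integral_Ioc_eq_integral_Ioo,
        ← intervalIntegral.integral_of_le one_pos.le, ← intervalIntegral.integral_of_le one_pos.le]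
    have h := intervalIntegral.integral_comp_sub_left (a := 0) (b := 1)
      (fun t => Real.log t * (t ^ (b - 1) * (1 - t) ^ (a - 1))) 1
    simp only [sub_zero, sub_self] at h
    rw [← h]
    apply intervalIntegral.integral_congr
    intro t _
    simp only []
    ring_nf
  rw [hflip, key, mybeta, mybeta, add_comm b a]
  ring

/-! ## Part 2: the simplex machinery -/

def T (m : ℕ) : Set (Fin m → ℝ) := {x | (∀ i, 0 < x i) ∧ ∑ i, x i < 1}

noncomputable def pv (m : ℕ) (x : Fin m → ℝ) (i : Fin (m+1)) : ℝ :=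
  if h : (i : ℕ) < m then x ⟨i, h⟩ else 1 - ∑ j, x j

lemma measT (m : ℕ) : MeasurableSet (T m) := by
  have h1 : MeasurableSet {x : Fin m → ℝ | ∀ i, 0 < x i} := by
    rw [Set.setOf_forall]
    exact MeasurableSet.iInter fun i =>
      measurableSet_lt measurable_const (measurable_pi_apply i)
  have h2 : MeasurableSet {x : Fin m → ℝ | ∑ i, x i < 1} :=
    measurableSet_lt (Finset.measurable_sum _ fun i _ => measurable_pi_apply i) measurable_const
  exact h1.inter h2

lemma pv_pos {m : ℕ} {x : Fin m → ℝ} (hx : x ∈ T m) (i : Fin (m+1)) : 0 < pv m x i := by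
  unfold pv
  split
  · exact hx.1 _
  · have := hx.2; linarith

lemma pv_meas (m : ℕ) (i : Fin (m+1)) : Measurable (fun x => pv m x i) := by
  unfold pv
  split
  · exact measurable_pi_apply _
  · exact measurable_const.sub (Finset.measurable_sum _ fun j _ => measurable_pi_apply j)

lemma pv_cons_zero (m : ℕ) (t : ℝ) (y : Fin m → ℝ) :
    pv (m+1) (Fin.cons t y) 0 = t := by
  have h : ((0 : Fin (m+2)) : ℕ) < m + 1 := Nat.succ_pos m
  rw [pv, dif_pos h]
  exact Fin.cons_zero _ _

lemma pv_cons_succ {m : ℕ} {t : ℝ} (z : Fin m → ℝ) (i : Fin (m+1)) :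
    pv (m+1) (Fin.cons t ((1-t) • z)) i.succ = (1-t) * pv m z i := by
  unfold pv
  by_cases h : (i : ℕ) < m
  · have h' : ((i.succ : Fin (m+2)) : ℕ) < m + 1 := by
      simpa [Fin.val_succ] using Nat.succ_lt_succ h
    rw [dif_pos h', dif_pos h]
    have : (⟨(i.succ : ℕ), h'⟩ : Fin (m+1)) = Fin.succ ⟨(i:ℕ), h⟩ := by
      ext; simp [Fin.val_succ]
    rw [this, Fin.cons_succ]
    simp
  · have h' : ¬ ((i.succ : Fin (m+2)) : ℕ) < m + 1 := by
      simpa [Fin.val_succ] using fun hlt => h (Nat.lt_of_succ_lt_succ hlt)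
    rw [dif_neg h', dif_neg h]
    rw [Fin.sum_cons]
    have hsum : ∑ j, ((1-t) • z) j = (1-t) * ∑ j, z j := by
      simp [Finset.mul_sum]
    rw [hsum]; ring

lemma cons_mem_T {m : ℕ} {t : ℝ} (ht : t ∈ Set.Ioo (0:ℝ) 1) (z : Fin m → ℝ) :
    Fin.cons t ((1-t) • z) ∈ T (m+1) ↔ z ∈ T m := by
  have h1t : (0:ℝ) < 1 - t := by linarith [ht.2]
  constructor
  · rintro ⟨hpos, hsum⟩
    constructor
    · intro i
      have := hpos i.succ
      rw [Fin.cons_succ] at this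
      have : 0 < (1-t) * z i := by simpa using this
      nlinarith
    · rw [Fin.sum_cons] at hsum
      have hsum' : ∑ j, ((1-t) • z) j = (1-t) * ∑ j, z j := by simp [Finset.mul_sum]
      rw [hsum'] at hsum
      nlinarith
  · rintro ⟨hpos, hsum⟩
    constructor
    · intro i
      refine Fin.cases ?_ ?_ i
      · rw [Fin.cons_zero]; exact ht.1
      · intro j
        rw [Fin.cons_succ]
        have := hpos j
        simpa using mul_pos h1t (hpos j)
    · rw [Fin.sum_cons]
      have hsum' : ∑ j, ((1-t) • z) j = (1-t) * ∑ j, z j := by simp [Finset.mul_sum]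
      rw [hsum']
      nlinarith

lemma cons_not_mem_T {m : ℕ} {t : ℝ} (ht : t ∉ Set.Ioo (0:ℝ) 1) (y : Fin m → ℝ) :
    Fin.cons t y ∉ T (m+1) := by
  rintro ⟨hpos, hsum⟩
  apply ht
  have h0 : 0 < t := by have := hpos 0; rwa [Fin.cons_zero] at this
  refine ⟨h0, ?_⟩
  rw [Fin.sum_cons] at hsum
  have : 0 ≤ ∑ j, y j := Finset.sum_nonneg fun j _ => by
    have := hpos j.succ; rw [Fin.cons_succ] at this; exact this.le
  linarith

/-- The key peeling lemma. -/
lemma peel {m : ℕ} (g : ℝ → ℝ) (h : (Fin m → ℝ) → ℝ) (F : (Fin (m+1) → ℝ) → ℝ)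
    (hgi : IntegrableOn (fun t => g t * (1-t)^m) (Set.Ioo 0 1))
    (hhi : Integrable h) (hFm : Measurable F)
    (hzero : ∀ t ∉ Set.Ioo (0:ℝ) 1, ∀ y, F (Fin.cons t y) = 0)
    (heq : ∀ t ∈ Set.Ioo (0:ℝ) 1, ∀ y, F (Fin.cons t y) = g t * h ((1-t)⁻¹ • y)) :
    Integrable F ∧ ∫ x, F x = (∫ t in Set.Ioo (0:ℝ) 1, g t * (1-t)^m) * ∫ z, h z := by
  classical
  set e := (MeasurableEquiv.piFinSuccAbove (fun _ : Fin (m+1) => ℝ) 0) with he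
  have hvp : MeasurePreserving e.symm
      ((volume : Measure ℝ).prod (volume : Measure (Fin m → ℝ))) volume :=
    (volume_preserving_piFinSuccAbove (fun _ : Fin (m+1) => ℝ) 0).symm
  have hsymm : ∀ (p : ℝ × (Fin m → ℝ)), e.symm p = Fin.cons p.1 p.2 := by
    intro p
    rw [he, MeasurableEquiv.piFinSuccAbove_symm_apply]
    simp [Fin.insertNthEquiv, Fin.insertNth_zero']
  set Φ : ℝ × (Fin m → ℝ) → ℝ := fun p => F (Fin.cons p.1 p.2) with hΦ
  have hcomp : (fun p : ℝ × (Fin m → ℝ) => F (e.symm p)) = Φ := by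
    funext p; rw [hsymm]
  have hΦmeas : Measurable Φ := by
    rw [← hcomp]; exact hFm.comp e.symm.measurable
  have h1t_pos : ∀ t ∈ Set.Ioo (0:ℝ) 1, (0:ℝ) < 1 - t := fun t ht => by linarith [ht.2]
  -- sections
  have hsec : ∀ t : ℝ, Integrable (fun y => Φ (t, y)) := by
    intro t
    by_cases ht : t ∈ Set.Ioo (0:ℝ) 1
    · have : (fun y => Φ (t, y)) = fun y => g t * h ((1-t)⁻¹ • y) := by
        funext y; exact heq t ht y
      rw [this]
      exact (hhi.comp_smul (inv_ne_zero (h1t_pos t ht).ne')).const_mul _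
    · have : (fun y => Φ (t, y)) = fun _ => 0 := by
        funext y; exact hzero t ht y
      rw [this]; exact integrable_zero _ _ _
  have hfr : Module.finrank ℝ (Fin m → ℝ) = m := by simp
  have hjac : ∀ t ∈ Set.Ioo (0:ℝ) 1, ∀ f : (Fin m → ℝ) → ℝ,
      ∫ y, f ((1-t)⁻¹ • y) = (1-t)^m * ∫ z, f z := by
    intro t ht f
    rw [MeasureTheory.Measure.integral_comp_smul volume f ((1-t)⁻¹), hfr, smul_eq_mul]
    congr 1
    rw [inv_pow, inv_inv, abs_of_nonneg (pow_nonneg (h1t_pos t ht).le _)]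
  -- inner integrals
  have hinner : ∀ t : ℝ, ∫ y, Φ (t, y)
      = Set.indicator (Set.Ioo (0:ℝ) 1) (fun t => g t * (1-t)^m * ∫ z, h z) t := by
    intro t
    by_cases ht : t ∈ Set.Ioo (0:ℝ) 1
    · rw [Set.indicator_of_mem ht]
      have h1 : (fun y => Φ (t, y)) = fun y => g t * h ((1-t)⁻¹ • y) := by
        funext y; exact heq t ht y
      rw [h1, MeasureTheory.integral_const_mul, hjac t ht h]
      ring
    · rw [Set.indicator_of_notMem ht]
      have h1 : (fun y => Φ (t, y)) = fun _ => 0 := by funext y; exact hzero t ht y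
      rw [h1]; simp
  have hinnernorm : ∀ t : ℝ, ∫ y, ‖Φ (t, y)‖
      = Set.indicator (Set.Ioo (0:ℝ) 1) (fun t => |g t| * (1-t)^m * ∫ z, ‖h z‖) t := by
    intro t
    by_cases ht : t ∈ Set.Ioo (0:ℝ) 1
    · rw [Set.indicator_of_mem ht]
      have h1 : (fun y => ‖Φ (t, y)‖) = fun y => |g t| * ‖h ((1-t)⁻¹ • y)‖ := by
        funext y
        show ‖F (Fin.cons t y)‖ = _
        rw [heq t ht y, norm_mul, Real.norm_eq_abs]
      rw [h1, MeasureTheory.integral_const_mul, hjac t ht (fun z => ‖h z‖)]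
      ring
    · rw [Set.indicator_of_notMem ht]
      have h1 : (fun y => ‖Φ (t, y)‖) = fun _ => 0 := by
        funext y
        show ‖F (Fin.cons t y)‖ = 0
        rw [hzero t ht y, norm_zero]
      rw [h1]; simp
  -- integrability of the norm-integral function
  have hgnorm : IntegrableOn (fun t => |g t| * (1-t)^m * ∫ z, ‖h z‖) (Set.Ioo 0 1) := by
    apply (hgi.norm.mul_const (∫ z, ‖h z‖)).congr
    refine Filter.eventuallyEq_of_mem (self_mem_ae_restrict measurableSet_Ioo)
      fun t ht => ?_
    rw [Real.norm_eq_abs, abs_mul, abs_of_nonneg (pow_nonneg (h1t_pos t ht).le _)]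
  have hnormint : Integrable (fun t => ∫ y, ‖Φ (t, y)‖) := by
    have : (fun t => ∫ y, ‖Φ (t, y)‖)
        = Set.indicator (Set.Ioo (0:ℝ) 1) (fun t => |g t| * (1-t)^m * ∫ z, ‖h z‖) := by
      funext t; exact hinnernorm t
    rw [this]
    exact (MeasureTheory.integrable_indicator_iff measurableSet_Ioo).2 hgnorm
  have hΦint : Integrable Φ ((volume : Measure ℝ).prod volume) := by
    refine (MeasureTheory.integrable_prod_iff hΦmeas.aestronglyMeasurable).2
      ⟨Filter.Eventually.of_forall hsec, ?_⟩
    exact hnormint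
  constructor
  · rw [← hvp.integrable_comp_emb e.symm.measurableEmbedding]
    exact hΦint.congr (Filter.Eventually.of_forall fun p => by
      show Φ p = F (e.symm p); rw [hsymm])
  · rw [← hvp.integral_comp e.symm.measurableEmbedding F]
    have : ∀ p : ℝ × (Fin m → ℝ), F (e.symm p) = Φ p := fun p => by rw [hsymm]
    rw [show (∫ p, F (e.symm p) ∂((volume : Measure ℝ).prod volume)) = ∫ p, Φ p
        ∂((volume : Measure ℝ).prod volume) from integral_congr_ae
        (Filter.Eventually.of_forall this)]
    rw [MeasureTheory.integral_prod _ hΦint]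
    rw [show (fun t => ∫ y, Φ (t, y)) = Set.indicator (Set.Ioo (0:ℝ) 1)
        (fun t => g t * (1-t)^m * ∫ z, h z) from funext hinner]
    rw [MeasureTheory.integral_indicator measurableSet_Ioo]
    rw [MeasureTheory.integral_mul_const]

lemma prodEq {m : ℕ} (β : Fin (m+2) → ℝ) {t : ℝ} (ht : t ∈ Set.Ioo (0:ℝ) 1)
    {z : Fin m → ℝ} (hz : z ∈ T m) :
    ∏ i, pv (m+1) (Fin.cons t ((1-t) • z)) i ^ (β i - 1)
      = (t ^ (β 0 - 1) * (1-t) ^ ((∑ i, β (Fin.succ i)) - (m+1 : ℝ))) *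
        ∏ i, pv m z i ^ (β (Fin.succ i) - 1) := by
  have h1t : (0:ℝ) < 1 - t := by linarith [ht.2]
  rw [Fin.prod_univ_succ, pv_cons_zero]
  have hstep : ∀ i : Fin (m+1), pv (m+1) (Fin.cons t ((1-t) • z)) i.succ ^ (β i.succ - 1)
      = (1-t) ^ (β i.succ - 1) * pv m z i ^ (β i.succ - 1) := by
    intro i
    rw [pv_cons_succ, Real.mul_rpow h1t.le (pv_pos hz i).le]
  rw [Finset.prod_congr rfl (fun i _ => hstep i), Finset.prod_mul_distrib,
    ← Real.rpow_sum_of_pos h1t]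
  rw [show ∑ i : Fin (m+1), (β i.succ - 1) = (∑ i, β (Fin.succ i)) - (m+1 : ℝ) by
    rw [Finset.sum_sub_distrib]; simp]
  ring

lemma prod_pv_meas (m : ℕ) (β : Fin (m+1) → ℝ) :
    Measurable (fun x => ∏ i, pv m x i ^ (β i - 1)) := by
  apply Finset.measurable_prod
  intro i _
  exact (by fun_prop : Measurable fun u : ℝ => u ^ (β i - 1)).comp (pv_meas m i)

lemma T_zero : T 0 = Set.univ := by
  ext x
  simp [T]

lemma pv_zero (x : Fin 0 → ℝ) (i : Fin 1) : pv 0 x i = 1 := by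
  unfold pv
  rw [dif_neg (by omega)]
  simp

lemma dirA : ∀ (m : ℕ) (β : Fin (m+1) → ℝ), (∀ i, 0 < β i) →
    IntegrableOn (fun x => ∏ i, pv m x i ^ (β i - 1)) (T m) ∧
    ∫ x in T m, ∏ i, pv m x i ^ (β i - 1)
      = (∏ i, Real.Gamma (β i)) / Real.Gamma (∑ i, β i) := by
  intro m
  induction m with
  | zero =>
    intro β hβ
    have hint : (fun x : Fin 0 → ℝ => ∏ i, pv 0 x i ^ (β i - 1)) = fun _ => (1:ℝ) := by
      funext x
      rw [Finset.prod_congr rfl (fun i _ => by rw [pv_zero x i, Real.one_rpow])]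
      simp
    rw [hint, T_zero]
    have hvol : (volume : Measure (Fin 0 → ℝ)) Set.univ = 1 := by
      simp [MeasureTheory.volume_pi]
    constructor
    · rw [IntegrableOn, Measure.restrict_univ]
      exact integrable_const _
    · rw [Measure.restrict_univ, MeasureTheory.integral_const, measureReal_def, hvol]
      rw [Fin.prod_univ_one, Fin.sum_univ_one]
      simp [div_self (Real.Gamma_pos_of_pos (hβ 0)).ne']
  | succ m ih =>
    intro β hβ
    have h1t_pos : ∀ t ∈ Set.Ioo (0:ℝ) 1, (0:ℝ) < 1 - t := fun t ht => by linarith [ht.2]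
    set B := ∑ i, β (Fin.succ i) with hBdef
    have hB : 0 < B := Finset.sum_pos (fun i _ => hβ _) Finset.univ_nonempty
    have hβ0 := hβ 0
    obtain ⟨ih_int, ih_val⟩ := ih (fun i => β (Fin.succ i)) (fun i => hβ _)
    set g : ℝ → ℝ := fun t => t ^ (β 0 - 1) * (1-t) ^ (B - (m+1 : ℝ)) with hgdef
    set h : (Fin m → ℝ) → ℝ :=
      (T m).indicator (fun z => ∏ i, pv m z i ^ (β (Fin.succ i) - 1)) with hhdef
    set F : (Fin (m+1) → ℝ) → ℝ :=
      (T (m+1)).indicator (fun x => ∏ i, pv (m+1) x i ^ (β i - 1)) with hFdef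
    have hgval : ∀ t ∈ Set.Ioo (0:ℝ) 1, g t * (1-t)^m = t ^ (β 0 - 1) * (1-t) ^ (B - 1) := by
      intro t ht
      rw [hgdef]
      rw [show ((1:ℝ)-t)^m = (1-t) ^ (m : ℝ) from (Real.rpow_natCast _ m).symm,
        mul_assoc, ← Real.rpow_add (h1t_pos t ht)]
      rw [show B - ((m:ℝ) + 1) + (m:ℝ) = B - 1 by ring]
    have hgi : IntegrableOn (fun t => g t * (1-t)^m) (Set.Ioo 0 1) := by
      apply (betaIntegrable hβ0 hB).congr
      exact Filter.eventuallyEq_of_mem (self_mem_ae_restrict measurableSet_Ioo)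
        fun t ht => (hgval t ht).symm
    have hhi : Integrable h := (integrable_indicator_iff (measT m)).2 ih_int
    have hFm : Measurable F := (prod_pv_meas (m+1) β).indicator (measT (m+1))
    have hzero : ∀ t ∉ Set.Ioo (0:ℝ) 1, ∀ y, F (Fin.cons t y) = 0 := fun t ht y =>
      Set.indicator_of_notMem (cons_not_mem_T ht y) _
    have heq : ∀ t ∈ Set.Ioo (0:ℝ) 1, ∀ y,
        F (Fin.cons t y) = g t * h ((1-t)⁻¹ • y) := by
      intro t ht y
      have h1t := h1t_pos t ht
      set z := (1-t)⁻¹ • y with hzdef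
      have hy : y = (1-t) • z := by rw [hzdef, smul_inv_smul₀ h1t.ne']
      rw [hy]
      by_cases hz : z ∈ T m
      · rw [hFdef, hhdef, Set.indicator_of_mem ((cons_mem_T ht z).2 hz),
          Set.indicator_of_mem hz, prodEq β ht hz]
      · rw [hFdef, hhdef, Set.indicator_of_notMem (fun hmem => hz ((cons_mem_T ht z).1 hmem)),
          Set.indicator_of_notMem hz, mul_zero]
    obtain ⟨hFint, hFval⟩ := peel g h F hgi hhi hFm hzero heq
    have hval1 : ∫ t in Set.Ioo (0:ℝ) 1, g t * (1-t)^m = mybeta (β 0) B := by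
      rw [setIntegral_congr_fun measurableSet_Ioo hgval]
      exact betaIntegral_eq hβ0 hB
    have hval2 : ∫ z, h z = (∏ i, Real.Gamma (β (Fin.succ i))) / Real.Gamma B := by
      rw [hhdef, MeasureTheory.integral_indicator (measT m), ih_val]
    constructor
    · exact (integrable_indicator_iff (measT (m+1))).1 hFint
    · rw [← MeasureTheory.integral_indicator (measT (m+1)), ← hFdef, hFval, hval1, hval2]
      rw [mybeta,
        show (∏ i : Fin (m+2), Real.Gamma (β i))
          = Real.Gamma (β 0) * ∏ i : Fin (m+1), Real.Gamma (β i.succ) from Fin.prod_univ_succ _,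
        show (∑ i : Fin (m+2), β i) = β 0 + B from Fin.sum_univ_succ _]
      have hGB := (Real.Gamma_pos_of_pos hB).ne'
      have hGab := (Real.Gamma_pos_of_pos (by linarith : (0:ℝ) < β 0 + B)).ne'
      field_simp

lemma betaLog1subIntegrable {a b : ℝ} (ha : 0 < a) (hb : 0 < b) :
    IntegrableOn (fun t : ℝ => Real.log (1-t) * (t ^ (a - 1) * (1 - t) ^ (b - 1)))
      (Ioo 0 1) := by
  have hbig : IntegrableOn (fun t : ℝ => (2/b) * (t ^ (a - 1) * (1 - t) ^ (b/2 - 1)))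
      (Ioo 0 1) := (betaIntegrable ha (by linarith)).const_mul _
  refine Integrable.mono hbig
    ((Real.measurable_log.comp (measurable_const.sub measurable_id)).mul
      (betaMeas a b)).aestronglyMeasurable ?_
  rw [ae_restrict_iff' measurableSet_Ioo]
  refine Filter.Eventually.of_forall fun t ht => ?_
  have ht0 := ht.1; have ht1 := ht.2
  have h1t : (0:ℝ) < 1 - t := by linarith
  have hlog : |Real.log (1-t)| ≤ (2/b) * (1-t) ^ (-(b/2)) := by
    rw [abs_of_nonpos (Real.log_nonpos (by linarith) (by linarith)), ← Real.log_inv]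
    have := Real.log_le_rpow_div (le_of_lt (inv_pos.2 h1t)) (by linarith : (0:ℝ) < b/2)
    calc Real.log (1-t)⁻¹ ≤ ((1-t)⁻¹) ^ (b/2) / (b/2) := this
      _ = (2/b) * (1-t) ^ (-(b/2)) := by
          rw [Real.inv_rpow h1t.le, ← Real.rpow_neg h1t.le]; ring
  rw [Real.norm_eq_abs, Real.norm_eq_abs, abs_mul,
    abs_of_nonneg (by positivity : (0:ℝ) ≤ t ^ (a - 1) * (1 - t) ^ (b - 1))]
  have step : |Real.log (1-t)| * (t ^ (a - 1) * (1 - t) ^ (b - 1))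
      ≤ ((2/b) * (1-t) ^ (-(b/2))) * (t ^ (a - 1) * (1 - t) ^ (b - 1)) :=
    mul_le_mul_of_nonneg_right hlog (by positivity)
  have heq : ((2/b) * (1-t) ^ (-(b/2))) * (t ^ (a - 1) * (1 - t) ^ (b - 1))
      = (2/b) * (t ^ (a - 1) * (1 - t) ^ (b/2 - 1)) := by
    rw [show b/2 - 1 = (b - 1) + (-(b/2)) by ring, Real.rpow_add h1t]
    ring
  refine step.trans ?_
  rw [heq]
  exact le_abs_self _

lemma betaLogIntegrable' {a b : ℝ} (ha : 0 < a) (hb : 0 < b) :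
    IntegrableOn (fun t : ℝ => Real.log t * (t ^ (a - 1) * (1 - t) ^ (b - 1))) (Ioo 0 1) :=
  (betaLog_hasDeriv ha hb).1

lemma x0_lt_one {m : ℕ} {x : Fin (m+1) → ℝ} (hx : x ∈ T (m+1)) : x 0 < 1 := by
  obtain ⟨hpos, hsum⟩ := hx
  have : x 0 ≤ ∑ j, x j :=
    Finset.single_le_sum (fun j _ => (hpos j).le) (Finset.mem_univ 0)
  linarith

lemma dirB : ∀ (m : ℕ) (β : Fin (m+1) → ℝ), (∀ i, 0 < β i) → ∀ (i₀ : Fin (m+1)),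
    IntegrableOn (fun x => Real.log (pv m x i₀) * ∏ i, pv m x i ^ (β i - 1)) (T m) ∧
    ∫ x in T m, Real.log (pv m x i₀) * ∏ i, pv m x i ^ (β i - 1)
      = ((∏ i, Real.Gamma (β i)) / Real.Gamma (∑ i, β i))
          * (digamma (β i₀) - digamma (∑ i, β i)) := by
  intro m
  induction m with
  | zero =>
    intro β hβ i₀
    have hi₀ : i₀ = 0 := Fin.eq_zero _
    have hint : (fun x : Fin 0 → ℝ => Real.log (pv 0 x i₀) * ∏ i, pv 0 x i ^ (β i - 1))
        = fun _ => (0:ℝ) := by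
      funext x
      rw [pv_zero x i₀, Real.log_one, zero_mul]
    rw [hint, hi₀]
    rw [Fin.sum_univ_one]
    constructor
    · exact integrable_zero _ _ _
    · rw [MeasureTheory.integral_zero]
      simp
  | succ m ih =>
    intro β hβ i₀
    have h1t_pos : ∀ t ∈ Set.Ioo (0:ℝ) 1, (0:ℝ) < 1 - t := fun t ht => by linarith [ht.2]
    set B := ∑ i, β (Fin.succ i) with hBdef
    have hB : 0 < B := Finset.sum_pos (fun i _ => hβ _) Finset.univ_nonempty
    have hβ0 := hβ 0
    have hsum_succ : (∑ i : Fin (m+2), β i) = β 0 + B := Fin.sum_univ_succ _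
    have hprod_succ : (∏ i : Fin (m+2), Real.Gamma (β i))
        = Real.Gamma (β 0) * ∏ i : Fin (m+1), Real.Gamma (β i.succ) := Fin.prod_univ_succ _
    obtain ⟨ihA_int, ihA_val⟩ := dirA m (fun i => β (Fin.succ i)) (fun i => hβ _)
    have hGB := (Real.Gamma_pos_of_pos hB).ne'
    have hGab := (Real.Gamma_pos_of_pos (by linarith : (0:ℝ) < β 0 + B)).ne'
    set h : (Fin m → ℝ) → ℝ :=
      (T m).indicator (fun z => ∏ i, pv m z i ^ (β (Fin.succ i) - 1)) with hhdef
    have hhi : Integrable h := (integrable_indicator_iff (measT m)).2 ihA_int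
    have hhval : ∫ z, h z = (∏ i, Real.Gamma (β (Fin.succ i))) / Real.Gamma B := by
      rw [hhdef, MeasureTheory.integral_indicator (measT m), ihA_val]
    -- common: the plain g from dirA
    set g0 : ℝ → ℝ := fun t => t ^ (β 0 - 1) * (1-t) ^ (B - (m+1 : ℝ)) with hg0def
    have hg0val : ∀ t ∈ Set.Ioo (0:ℝ) 1, g0 t * (1-t)^m
        = t ^ (β 0 - 1) * (1-t) ^ (B - 1) := by
      intro t ht
      rw [hg0def]
      rw [show ((1:ℝ)-t)^m = (1-t) ^ (m : ℝ) from (Real.rpow_natCast _ m).symm,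
        mul_assoc, ← Real.rpow_add (h1t_pos t ht)]
      rw [show B - ((m:ℝ) + 1) + (m:ℝ) = B - 1 by ring]
    refine Fin.cases ?_ ?_ i₀
    · -- i₀ = 0 : weight log t
      set g : ℝ → ℝ := fun t => Real.log t * g0 t with hgdef
      set F : (Fin (m+1) → ℝ) → ℝ :=
        (T (m+1)).indicator
          (fun x => Real.log (pv (m+1) x 0) * ∏ i, pv (m+1) x i ^ (β i - 1)) with hFdef
      have hgval : ∀ t ∈ Set.Ioo (0:ℝ) 1, g t * (1-t)^m
          = Real.log t * (t ^ (β 0 - 1) * (1-t) ^ (B - 1)) := by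
        intro t ht
        rw [hgdef]
        have := hg0val t ht
        simp only [] at this ⊢
        rw [mul_assoc, this]
      have hgi : IntegrableOn (fun t => g t * (1-t)^m) (Set.Ioo 0 1) := by
        apply (betaLogIntegrable' hβ0 hB).congr
        exact Filter.eventuallyEq_of_mem (self_mem_ae_restrict measurableSet_Ioo)
          fun t ht => (hgval t ht).symm
      have hFm : Measurable F :=
        ((Real.measurable_log.comp (pv_meas (m+1) 0)).mul
          (prod_pv_meas (m+1) β)).indicator (measT (m+1))
      have hzero : ∀ t ∉ Set.Ioo (0:ℝ) 1, ∀ y, F (Fin.cons t y) = 0 := fun t ht y =>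
        Set.indicator_of_notMem (cons_not_mem_T ht y) _
      have heq : ∀ t ∈ Set.Ioo (0:ℝ) 1, ∀ y,
          F (Fin.cons t y) = g t * h ((1-t)⁻¹ • y) := by
        intro t ht y
        have h1t := h1t_pos t ht
        set z := (1-t)⁻¹ • y with hzdef
        have hy : y = (1-t) • z := by rw [hzdef, smul_inv_smul₀ h1t.ne']
        rw [hy]
        by_cases hz : z ∈ T m
        · rw [hFdef, hhdef, Set.indicator_of_mem ((cons_mem_T ht z).2 hz),
            Set.indicator_of_mem hz, prodEq β ht hz, pv_cons_zero]
          rw [hgdef]; ring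
        · rw [hFdef, hhdef,
            Set.indicator_of_notMem (fun hmem => hz ((cons_mem_T ht z).1 hmem)),
            Set.indicator_of_notMem hz, mul_zero]
      obtain ⟨hFint, hFval⟩ := peel g h F hgi hhi hFm hzero heq
      have hval1 : ∫ t in Set.Ioo (0:ℝ) 1, g t * (1-t)^m
          = mybeta (β 0) B * (digamma (β 0) - digamma (β 0 + B)) := by
        rw [setIntegral_congr_fun measurableSet_Ioo hgval]
        exact betaLog_eq hβ0 hB
      constructor
      · exact (integrable_indicator_iff (measT (m+1))).1 hFint
      · rw [← MeasureTheory.integral_indicator (measT (m+1)), ← hFdef, hFval, hval1, hhval,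
          hsum_succ, hprod_succ, mybeta]
        field_simp
    · -- i₀ = j.succ
      intro j
      have hβj := hβ j.succ
      obtain ⟨ihB_int, ihB_val⟩ := ih (fun i => β (Fin.succ i)) (fun i => hβ _) j
      set h2 : (Fin m → ℝ) → ℝ :=
        (T m).indicator (fun z => Real.log (pv m z j) *
          ∏ i, pv m z i ^ (β (Fin.succ i) - 1)) with hh2def
      have hh2i : Integrable h2 := (integrable_indicator_iff (measT m)).2 ihB_int
      have hh2val : ∫ z, h2 z = ((∏ i, Real.Gamma (β (Fin.succ i))) / Real.Gamma B)
          * (digamma (β j.succ) - digamma B) := by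
        rw [hh2def, MeasureTheory.integral_indicator (measT m), ihB_val]
      set g1 : ℝ → ℝ := fun t => Real.log (1-t) * g0 t with hg1def
      set F1 : (Fin (m+1) → ℝ) → ℝ :=
        (T (m+1)).indicator
          (fun x => Real.log (1 - x 0) * ∏ i, pv (m+1) x i ^ (β i - 1)) with hF1def
      set F2 : (Fin (m+1) → ℝ) → ℝ :=
        (T (m+1)).indicator
          (fun x => Real.log (pv (m+1) x j.succ / (1 - x 0)) *
            ∏ i, pv (m+1) x i ^ (β i - 1)) with hF2def
      set F : (Fin (m+1) → ℝ) → ℝ :=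
        (T (m+1)).indicator
          (fun x => Real.log (pv (m+1) x j.succ) *
            ∏ i, pv (m+1) x i ^ (β i - 1)) with hFdef
      have hsplit : ∀ x, F x = F1 x + F2 x := by
        intro x
        by_cases hx : x ∈ T (m+1)
        · rw [hFdef, hF1def, hF2def, Set.indicator_of_mem hx, Set.indicator_of_mem hx,
            Set.indicator_of_mem hx]
          have h1x : (0:ℝ) < 1 - x 0 := by linarith [x0_lt_one hx]
          have hpvx : 0 < pv (m+1) x j.succ := pv_pos hx j.succ
          have hdiv : 0 < pv (m+1) x j.succ / (1 - x 0) := div_pos hpvx h1x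
          have : Real.log (pv (m+1) x j.succ)
              = Real.log (1 - x 0) + Real.log (pv (m+1) x j.succ / (1 - x 0)) := by
            rw [← Real.log_mul h1x.ne' (ne_of_gt hdiv), mul_div_cancel₀ _ h1x.ne']
          rw [this, add_mul]
        · rw [hFdef, hF1def, hF2def, Set.indicator_of_notMem hx,
            Set.indicator_of_notMem hx, Set.indicator_of_notMem hx, add_zero]
      -- peel F1
      have hg1val : ∀ t ∈ Set.Ioo (0:ℝ) 1, g1 t * (1-t)^m
          = Real.log (1-t) * (t ^ (β 0 - 1) * (1-t) ^ (B - 1)) := by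
        intro t ht
        rw [hg1def]
        have := hg0val t ht
        simp only [] at this ⊢
        rw [mul_assoc, this]
      have hg1i : IntegrableOn (fun t => g1 t * (1-t)^m) (Set.Ioo 0 1) := by
        apply (betaLog1subIntegrable hβ0 hB).congr
        exact Filter.eventuallyEq_of_mem (self_mem_ae_restrict measurableSet_Ioo)
          fun t ht => (hg1val t ht).symm
      have hF1m : Measurable F1 :=
        ((Real.measurable_log.comp (measurable_const.sub (measurable_pi_apply 0))).mul
          (prod_pv_meas (m+1) β)).indicator (measT (m+1))
      have hzero1 : ∀ t ∉ Set.Ioo (0:ℝ) 1, ∀ y, F1 (Fin.cons t y) = 0 := fun t ht y =>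
        Set.indicator_of_notMem (cons_not_mem_T ht y) _
      have heq1 : ∀ t ∈ Set.Ioo (0:ℝ) 1, ∀ y,
          F1 (Fin.cons t y) = g1 t * h ((1-t)⁻¹ • y) := by
        intro t ht y
        have h1t := h1t_pos t ht
        set z := (1-t)⁻¹ • y with hzdef
        have hy : y = (1-t) • z := by rw [hzdef, smul_inv_smul₀ h1t.ne']
        rw [hy]
        by_cases hz : z ∈ T m
        · rw [hF1def, hhdef, Set.indicator_of_mem ((cons_mem_T ht z).2 hz),
            Set.indicator_of_mem hz, prodEq β ht hz, Fin.cons_zero]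
          rw [hg1def]; ring
        · rw [hF1def, hhdef,
            Set.indicator_of_notMem (fun hmem => hz ((cons_mem_T ht z).1 hmem)),
            Set.indicator_of_notMem hz, mul_zero]
      obtain ⟨hF1int, hF1val⟩ := peel g1 h F1 hg1i hhi hF1m hzero1 heq1
      -- peel F2
      have hg0i : IntegrableOn (fun t => g0 t * (1-t)^m) (Set.Ioo 0 1) := by
        apply (betaIntegrable hβ0 hB).congr
        exact Filter.eventuallyEq_of_mem (self_mem_ae_restrict measurableSet_Ioo)
          fun t ht => (hg0val t ht).symm
      have hF2m : Measurable F2 :=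
        ((Real.measurable_log.comp ((pv_meas (m+1) j.succ).div
          (measurable_const.sub (measurable_pi_apply 0)))).mul
          (prod_pv_meas (m+1) β)).indicator (measT (m+1))
      have hzero2 : ∀ t ∉ Set.Ioo (0:ℝ) 1, ∀ y, F2 (Fin.cons t y) = 0 := fun t ht y =>
        Set.indicator_of_notMem (cons_not_mem_T ht y) _
      have heq2 : ∀ t ∈ Set.Ioo (0:ℝ) 1, ∀ y,
          F2 (Fin.cons t y) = g0 t * h2 ((1-t)⁻¹ • y) := by
        intro t ht y
        have h1t := h1t_pos t ht
        set z := (1-t)⁻¹ • y with hzdef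
        have hy : y = (1-t) • z := by rw [hzdef, smul_inv_smul₀ h1t.ne']
        rw [hy]
        by_cases hz : z ∈ T m
        · rw [hF2def, hh2def, Set.indicator_of_mem ((cons_mem_T ht z).2 hz),
            Set.indicator_of_mem hz, prodEq β ht hz, Fin.cons_zero, pv_cons_succ]
          rw [mul_comm ((1:ℝ)-t) (pv m z j), mul_div_assoc, div_self h1t.ne', mul_one]
          ring
        · rw [hF2def, hh2def,
            Set.indicator_of_notMem (fun hmem => hz ((cons_mem_T ht z).1 hmem)),
            Set.indicator_of_notMem hz, mul_zero]
      obtain ⟨hF2int, hF2val⟩ := peel g0 h2 F2 hg0i hh2i hF2m hzero2 heq2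
      -- combine
      have hFint : Integrable F := by
        apply (hF1int.add hF2int).congr
        exact Filter.Eventually.of_forall fun x => (hsplit x).symm
      have hFval : ∫ x, F x = (∫ x, F1 x) + ∫ x, F2 x := by
        rw [show F = fun x => F1 x + F2 x from funext hsplit]
        exact MeasureTheory.integral_add hF1int hF2int
      have hval1 : ∫ t in Set.Ioo (0:ℝ) 1, g1 t * (1-t)^m
          = mybeta (β 0) B * (digamma B - digamma (β 0 + B)) := by
        rw [setIntegral_congr_fun measurableSet_Ioo hg1val]
        exact betaLog_one_sub_eq hβ0 hB
      have hval0 : ∫ t in Set.Ioo (0:ℝ) 1, g0 t * (1-t)^m = mybeta (β 0) B := by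
        rw [setIntegral_congr_fun measurableSet_Ioo hg0val]
        exact betaIntegral_eq hβ0 hB
      constructor
      · exact (integrable_indicator_iff (measT (m+1))).1 hFint
      · rw [← MeasureTheory.integral_indicator (measT (m+1)), ← hFdef, hFval,
          hF1val, hF2val, hval1, hval0, hhval, hh2val, hsum_succ, hprod_succ, mybeta]
        field_simp
        ring

noncomputable def risingFac' (z : ℝ) (n : ℕ) : ℝ := ∏ k ∈ Finset.range n, (z + (k : ℝ))

lemma Gamma_risingFac {z : ℝ} (hz : 0 < z) (n : ℕ) :
    Real.Gamma (z + n) = risingFac' z n * Real.Gamma z := by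
  induction n with
  | zero => simp [risingFac']
  | succ n ihn =>
    have hzn : z + (n:ℝ) ≠ 0 := by positivity
    have : z + ((n+1 : ℕ) : ℝ) = (z + n) + 1 := by push_cast; ring
    rw [this, Real.Gamma_add_one hzn, ihn,
      show risingFac' z (n+1) = risingFac' z n * (z + (n:ℝ)) from Finset.prod_range_succ _ _]
    ring

lemma risingFac'_pos {z : ℝ} (hz : 0 < z) (n : ℕ) : 0 < risingFac' z n := by
  apply Finset.prod_pos
  intro k _
  positivity

theorem dirichlet_log_moment' (m : ℕ) (α : Fin (m+1) → ℝ)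
    (hα : ∀ i, 0 < α i) (i : Fin (m+1)) (n : ℕ) :
    (∫ x in T m, ((pv m x i ^ n * Real.log (pv m x i)) *
        ((Real.Gamma (∑ j, α j) / ∏ j, Real.Gamma (α j)) *
          ∏ j, pv m x j ^ (α j - 1)))) =
      (risingFac' (α i) n / risingFac' (∑ k, α k) n) *
        (digamma (α i + n) - digamma ((∑ k, α k) + n)) := by
  set β : Fin (m+1) → ℝ := fun j => α j + if j = i then (n:ℝ) else 0 with hβdef
  have hβpos : ∀ j, 0 < β j := fun j => by
    have h1 := hα j
    have h2 : (0:ℝ) ≤ if j = i then (n:ℝ) else 0 := by positivity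
    rw [hβdef]
    dsimp only
    linarith
  have hβi : β i = α i + n := by rw [hβdef]; simp
  have hβsum : ∑ j, β j = (∑ j, α j) + n := by
    rw [hβdef, Finset.sum_add_distrib]
    congr 1
    rw [Finset.sum_ite_eq' Finset.univ i (fun _ => (n:ℝ))]
    simp
  have hαsum : 0 < ∑ j, α j := Finset.sum_pos (fun j _ => hα j) Finset.univ_nonempty
  set C : ℝ := Real.Gamma (∑ j, α j) / ∏ j, Real.Gamma (α j) with hCdef
  have hstep : ∫ x in T m, ((pv m x i ^ n * Real.log (pv m x i)) *
      (C * ∏ j, pv m x j ^ (α j - 1)))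
      = ∫ x in T m, C * (Real.log (pv m x i) * ∏ j, pv m x j ^ (β j - 1)) := by
    apply setIntegral_congr_fun (measT m)
    intro x hx
    have hpv : ∀ j, 0 < pv m x j := pv_pos hx
    have hprod : ∏ j, pv m x j ^ (β j - 1)
        = (∏ j, pv m x j ^ (α j - 1)) * pv m x i ^ (n:ℝ) := by
      have : ∀ j : Fin (m+1), pv m x j ^ (β j - 1)
          = pv m x j ^ (α j - 1) * pv m x j ^ (if j = i then (n:ℝ) else 0) := by
        intro j
        rw [← Real.rpow_add (hpv j)]
        congr 1
        rw [hβdef]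
        ring
      rw [Finset.prod_congr rfl (fun j _ => this j), Finset.prod_mul_distrib]
      congr 1
      rw [Finset.prod_eq_single i (fun j _ hj => by rw [if_neg hj, Real.rpow_zero])
        (fun hmem => absurd (Finset.mem_univ i) hmem), if_pos rfl]
    simp only []
    rw [hprod, ← Real.rpow_natCast (pv m x i) n]
    ring
  rw [hstep, MeasureTheory.integral_const_mul, (dirB m β hβpos i).2, hβi, hβsum]
  have hGαprod : ∀ j, Real.Gamma (α j) ≠ 0 := fun j => (Real.Gamma_pos_of_pos (hα j)).ne'
  have hprodsplit : ∏ j, Real.Gamma (β j)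
      = Real.Gamma (α i + n) * ∏ j ∈ Finset.univ.erase i, Real.Gamma (α j) := by
    rw [← Finset.mul_prod_erase Finset.univ _ (Finset.mem_univ i), hβi]
    congr 1
    apply Finset.prod_congr rfl
    intro j hj
    rw [hβdef]
    dsimp only
    rw [if_neg (Finset.mem_erase.1 hj).1]
    simp
  have hprodα : ∏ j, Real.Gamma (α j)
      = Real.Gamma (α i) * ∏ j ∈ Finset.univ.erase i, Real.Gamma (α j) :=
    (Finset.mul_prod_erase Finset.univ _ (Finset.mem_univ i)).symm
  rw [hCdef, hprodsplit, hprodα]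
  rw [Gamma_risingFac (hα i) n, Gamma_risingFac hαsum n]
  have h1 := (Real.Gamma_pos_of_pos (hα i)).ne'
  have h2 := (Real.Gamma_pos_of_pos hαsum).ne'
  have h3 : (∏ j ∈ Finset.univ.erase i, Real.Gamma (α j)) ≠ 0 :=
    Finset.prod_ne_zero_iff.2 fun j _ => hGαprod j
  have h4 := (risingFac'_pos hαsum n).ne'
  field_simp

/-- **Dirichlet moment:** for every index `i` and `n : ℕ`,
`E_α[pᵢⁿ log pᵢ] = (αᵢ^{(n)} / α₀^{(n)}) (ψ(αᵢ+n) - ψ(α₀+n))`. -/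
theorem dirichlet_log_moment (K : ℕ) (hK : 1 ≤ K) (α : Fin K → ℝ)
    (hα : ∀ i, 0 < α i) (i : Fin K) (n : ℕ) :
    dirE α (fun p => p i ^ n * Real.log (p i)) =
      (risingFac (α i) n / risingFac (∑ k, α k) n) *
        (digamma (α i + n) - digamma ((∑ k, α k) + n)) := by
  obtain ⟨m, rfl⟩ : ∃ m, K = m + 1 := ⟨K - 1, (Nat.succ_pred_eq_of_pos hK).symm⟩
  have key := dirichlet_log_moment' m α hα i n
  have hrF : risingFac = risingFac' := rfl
  rw [hrF, ← key]
  rfl
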